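/- Let {𝓗,Γ₀,Γ₁} be a unitary boundary triple for A* with γ-field γ, A₀ = ker Γ₀ and H(λ) as in the context. Then for every λ ∈ ℂ∖ℝ: the operator γ(conj λ) is densely defined in 𝓗, and Γ₁∘H(λ) = γ(conj λ)* (equality of single-valued operators from ran(A₀−λ) ⊆ 𝔥 into 𝓗; in particular dom γ(conj λ)* = ran(A₀−λ)). Consequently, Γ₁∘H(λ) is a bounded operator for one (equivalently all) λ ∈ ℂ∖ℝ — equivalently, the restriction of Γ₁ to A₀ is a bounded operator — if and only if A₀ is a closed relation. -/

import Mathlib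

noncomputable section

open Filter Topology

namespace BT

local notation "⟪" x ", " y "⟫" => @inner ℂ _ _ x y

section Ops
variable {α β γ' : Type*}

def domR (T : Set (α × β)) : Set α := {x | ∃ y, (x, y) ∈ T}
def ranR (T : Set (α × β)) : Set β := {y | ∃ x, (x, y) ∈ T}
def kerR [Zero β] (T : Set (α × β)) : Set α := {x | (x, (0 : β)) ∈ T}
def mulR [Zero α] (T : Set (α × β)) : Set β := {y | ((0 : α), y) ∈ T}
def invR (T : Set (α × β)) : Set (β × α) := {p | (p.2, p.1) ∈ T}
def compR (T₂ : Set (β × γ')) (T₁ : Set (α × β)) : Set (α × γ') :=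
  {p | ∃ y, (p.1, y) ∈ T₁ ∧ (y, p.2) ∈ T₂}
def csum [Add α] [Add β] (T₁ T₂ : Set (α × β)) : Set (α × β) :=
  {p | ∃ q ∈ T₁, ∃ r ∈ T₂, p = (q.1 + r.1, q.2 + r.2)}

def IsLinRel {M : Type*} [AddCommGroup M] [Module ℂ M] (s : Set M) : Prop :=
  ∃ p : Submodule ℂ M, (p : Set M) = s

def IsBddRel [Norm α] [Norm β] (T : Set (α × β)) : Prop :=
  ∃ C : ℝ, ∀ p ∈ T, ‖p.2‖ ≤ C * ‖p.1‖

def BddInv [NormedAddCommGroup α] (T : Set (α × α)) : Prop :=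
  (∀ v, ∃ p ∈ T, p.2 = v) ∧ (∀ p ∈ T, ∀ q ∈ T, p.2 = q.2 → p.1 = q.1) ∧
    ∃ C : ℝ, ∀ p ∈ T, ‖p.1‖ ≤ C * ‖p.2‖
end Ops

section Shifts
variable {α : Type*} [AddCommGroup α] [Module ℂ α]

def shiftSub (T : Set (α × α)) (l : ℂ) : Set (α × α) :=
  {p | ∃ q ∈ T, p = (q.1, q.2 - l • q.1)}
def shiftAdd (T : Set (α × α)) (l : ℂ) : Set (α × α) :=
  {p | ∃ q ∈ T, p = (q.1, q.2 + l • q.1)}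
def hatN (T : Set (α × α)) (l : ℂ) : Set (α × α) := {p ∈ T | p.2 = l • p.1}
def Nlam (T : Set (α × α)) (l : ℂ) : Set α := {f | (f, l • f) ∈ T}
def Hrel (A0s : Set (α × α)) (l : ℂ) : Set (α × (α × α)) :=
  {q | q.2 ∈ A0s ∧ q.2.2 - l • q.2.1 = q.1}
end Shifts

section InnerDefs
variable {E F : Type*} [NormedAddCommGroup E] [InnerProductSpace ℂ E]
  [NormedAddCommGroup F] [InnerProductSpace ℂ F]

def adjR (S : Set (F × E)) : Set (E × F) :=
  {p | ∀ q ∈ S, ⟪p.1, q.2⟫ = ⟪p.2, q.1⟫}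

def IsClosedSymRel (A : Set (E × E)) : Prop :=
  IsLinRel A ∧ IsClosed A ∧ A ⊆ adjR A

def kIP (p q : E × E) : ℂ := -Complex.I * ⟪q.1, p.2⟫ + Complex.I * ⟪q.2, p.1⟫

def kreinOrth (S : Set (E × E)) : Set (E × E) := {v | ∀ u ∈ S, kIP u v = 0}

def GreenPair (Γ : Set ((E × E) × (F × F))) : Prop :=
  ∀ p ∈ Γ, ∀ q ∈ Γ,
    ⟪q.1.1, p.1.2⟫ - ⟪q.1.2, p.1.1⟫ = ⟪q.2.1, p.2.2⟫ - ⟪q.2.2, p.2.1⟫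

def G0 (Γ : Set ((E × E) × (F × F))) : Set ((E × E) × F) := {p | ∃ h', (p.1, (p.2, h')) ∈ Γ}
def G1 (Γ : Set ((E × E) × (F × F))) : Set ((E × E) × F) := {p | ∃ h, (p.1, (h, p.2)) ∈ Γ}
def A0 (Γ : Set ((E × E) × (F × F))) : Set (E × E) := kerR (G0 Γ)
def A1 (Γ : Set ((E × E) × (F × F))) : Set (E × E) := kerR (G1 Γ)
def weyl (Γ : Set ((E × E) × (F × F))) (l : ℂ) : Set (F × F) :=
  {p | ∃ f : E, ((f, l • f), p) ∈ Γ}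
def gfield (Γ : Set ((E × E) × (F × F))) (l : ℂ) : Set (F × E) :=
  {p | ∃ h', ((p.2, l • p.2), (p.1, h')) ∈ Γ}

def kreinAdj (Γ : Set ((E × E) × (F × F))) : Set ((F × F) × (E × E)) :=
  {q | ∀ p ∈ Γ, kIP p.1 q.2 = kIP p.2 q.1}

def IsIsomPair (A : Set (E × E)) (Γ : Set ((E × E) × (F × F))) : Prop :=
  IsLinRel Γ ∧ domR Γ ⊆ adjR A ∧ GreenPair Γ
def IsDomDense (A : Set (E × E)) (Γ : Set ((E × E) × (F × F))) : Prop :=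
  closure (domR Γ) = adjR A
def IsABPair (A : Set (E × E)) (Γ : Set ((E × E) × (F × F))) : Prop :=
  IsIsomPair A Γ ∧ IsDomDense A Γ ∧ Dense (ranR (G0 Γ)) ∧ A0 Γ = adjR (A0 Γ)
def IsBPair (A : Set (E × E)) (Γ : Set ((E × E) × (F × F))) : Prop :=
  IsABPair A Γ ∧ ranR (G0 Γ) = Set.univ
def IsUnitaryPair (A : Set (E × E)) (Γ : Set ((E × E) × (F × F))) : Prop :=
  GreenPair Γ ∧ domR Γ ⊆ adjR A ∧ IsDomDense A Γ ∧ invR Γ = kreinAdj Γ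
def IsUnitaryBT (A : Set (E × E)) (Γ : Set ((E × E) × (F × F))) : Prop :=
  IsUnitaryPair A Γ ∧ mulR Γ = {0}
def IsOrdinaryBT (A : Set (E × E)) (Γ : Set ((E × E) × (F × F))) : Prop :=
  IsIsomPair A Γ ∧ mulR Γ = {0} ∧ domR Γ = adjR A ∧ ranR Γ = Set.univ

def Erel (Γ : Set ((E × E) × (F × F))) (m : ℂ) : Set (F × F) :=
  {p | ∃ u' v', (p.1, u') ∈ weyl Γ m ∧ (p.1, v') ∈ weyl Γ ((starRingEnd ℂ) m) ∧
        p.2 = (2 : ℂ)⁻¹ • (u' + v')}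

def triTransform (Γ : Set ((E × E) × (F × F))) (e : Set (F × F)) :
    Set ((E × E) × (F × F)) :=
  {q | ∃ h h' w, (q.1, (h, h')) ∈ Γ ∧ (h, w) ∈ e ∧ q.2 = (h, w + h')}

def formVal (l : ℂ) (u u' : F) : ℝ :=
  ((l - (starRingEnd ℂ) l)⁻¹ * (⟪u, u'⟫ - ⟪u', u⟫)).re

def FormClosable (l : ℂ) (Ms : Set (F × F)) : Prop :=
  ∀ u u' : ℕ → F, (∀ n, (u n, u' n) ∈ Ms) →
    Tendsto u atTop (nhds (0 : F)) →
    Tendsto (fun nm : ℕ × ℕ => formVal l (u nm.1 - u nm.2) (u' nm.1 - u' nm.2)) atTop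
      (nhds (0 : ℝ)) →
    Tendsto (fun n => formVal l (u n) (u' n)) atTop (nhds (0 : ℝ))

def formClosureDom (l : ℂ) (Ms : Set (F × F)) : Set F :=
  {v | ∃ u u' : ℕ → F, (∀ n, (u n, u' n) ∈ Ms) ∧ Tendsto u atTop (nhds v) ∧
    Tendsto (fun nm : ℕ × ℕ => formVal l (u nm.1 - u nm.2) (u' nm.1 - u' nm.2)) atTop
      (nhds (0 : ℝ))}

end InnerDefs

section CompleteDefs
variable {F : Type*} [NormedAddCommGroup F] [InnerProductSpace ℂ F] [CompleteSpace F]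

def IsNevFun (M₀ : ℂ → F →L[ℂ] F) : Prop :=
  DifferentiableOn ℂ M₀ {l : ℂ | l.im ≠ 0} ∧
  (∀ l : ℂ, l.im ≠ 0 → M₀ ((starRingEnd ℂ) l) = ContinuousLinearMap.adjoint (M₀ l)) ∧
  (∀ l : ℂ, 0 < l.im → ∀ u, 0 ≤ (⟪u, M₀ l u⟫).im)

def ImOp (Tb : F →L[ℂ] F) : F →L[ℂ] F :=
  ((2 : ℂ) * Complex.I)⁻¹ • (Tb - ContinuousLinearMap.adjoint Tb)

end CompleteDefs

variable {E F : Type*} [NormedAddCommGroup E] [InnerProductSpace ℂ E] [CompleteSpace E]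
  [NormedAddCommGroup F] [InnerProductSpace ℂ F] [CompleteSpace F]


-- ===================== auxiliary development =====================
set_option linter.unusedSectionVars false
set_option maxHeartbeats 1600000

section AuxGeneral
variable {K : Type*} [NormedAddCommGroup K] [InnerProductSpace ℂ K]

lemma aux_lower (l : ℂ) {f f' : K} (hsym : ⟪f, f'⟫ = ⟪f', f⟫) :
    |l.im| * ‖f‖ ≤ ‖f' - l • f‖ := by
  have him : (⟪f', f⟫ : ℂ).im = 0 := by
    have h2 : (starRingEnd ℂ) ⟪f, f'⟫ = ⟪f', f⟫ := inner_conj_symm f' f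
    rw [hsym] at h2
    exact Complex.conj_eq_iff_im.mp h2
  have key : ‖f' - l • f‖ ^ 2
      = (‖f'‖^2 - 2 * (l.re * (⟪f', f⟫ : ℂ).re) + l.re^2 * ‖f‖^2) + l.im^2 * ‖f‖^2 := by
    rw [norm_sub_sq (𝕜 := ℂ), inner_smul_right, norm_smul, mul_pow]
    simp [Complex.mul_re, him, Complex.sq_norm, Complex.normSq_apply]
    try ring
  have key2 : ‖f' - (l.re : ℂ) • f‖ ^ 2
      = ‖f'‖^2 - 2 * (l.re * (⟪f', f⟫ : ℂ).re) + l.re^2 * ‖f‖^2 := by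
    rw [norm_sub_sq (𝕜 := ℂ), inner_smul_right, norm_smul, mul_pow]
    simp [Complex.mul_re, him, Complex.sq_norm, Complex.normSq_apply]
    try ring
  nlinarith [norm_nonneg (f' - l • f), norm_nonneg f, abs_nonneg l.im, sq_abs l.im,
    sq_nonneg (‖f' - (l.re : ℂ) • f‖), mul_nonneg (abs_nonneg l.im) (norm_nonneg f),
    sq_nonneg (‖f' - l • f‖ + |l.im| * ‖f‖), sq_nonneg (‖f' - l • f‖ - |l.im| * ‖f‖)]

end AuxGeneral

section AdjRProps
variable {E F : Type*} [NormedAddCommGroup E] [InnerProductSpace ℂ E]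
  [NormedAddCommGroup F] [InnerProductSpace ℂ F]

lemma adjR_zero (S : Set (F × E)) : (0 : E × F) ∈ adjR S := by
  intro q _; simp

lemma adjR_add {S : Set (F × E)} {p q : E × F} (hp : p ∈ adjR S) (hq : q ∈ adjR S) :
    p + q ∈ adjR S := by
  intro r hr
  simp only [Prod.fst_add, Prod.snd_add, inner_add_left]
  rw [hp r hr, hq r hr]

lemma adjR_smul {S : Set (F × E)} {p : E × F} (c : ℂ) (hp : p ∈ adjR S) :
    c • p ∈ adjR S := by
  intro r hr
  simp only [Prod.smul_fst, Prod.smul_snd, inner_smul_left]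
  rw [hp r hr]

lemma adjR_sub {S : Set (F × E)} {p q : E × F} (hp : p ∈ adjR S) (hq : q ∈ adjR S) :
    p - q ∈ adjR S := by
  intro r hr
  simp only [Prod.fst_sub, Prod.snd_sub, inner_sub_left]
  rw [hp r hr, hq r hr]

lemma adjR_isClosed (S : Set (F × E)) : IsClosed (adjR S) := by
  have h : adjR S = ⋂ (q : F × E) (_ : q ∈ S), {p : E × F | ⟪p.1, q.2⟫ = ⟪p.2, q.1⟫} := by
    ext p; simp [adjR]
  rw [h]
  exact isClosed_iInter fun q => isClosed_iInter fun _ =>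
    isClosed_eq (Continuous.inner continuous_fst continuous_const)
      (Continuous.inner continuous_snd continuous_const)

end AdjRProps

section Resolvent
variable {K : Type*} [NormedAddCommGroup K] [InnerProductSpace ℂ K] [CompleteSpace K]

lemma selfadj_resolvent {S : Set (K × K)} (hS : adjR S = S) {l : ℂ} (hl : l.im ≠ 0) :
    ∃ B : K →L[ℂ] K, (∀ x, (B x, x + l • B x) ∈ S) ∧ ∀ p ∈ S, B (p.2 - l • p.1) = p.1 := by
  have hpos : (0:ℝ) < |l.im| := abs_pos.mpr hl
  have hpair : ∀ p ∈ S, ∀ q ∈ S, ⟪p.1, q.2⟫ = ⟪p.2, q.1⟫ := by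
    intro p hp; rw [← hS] at hp; exact hp
  have hself : ∀ p ∈ S, ⟪p.1, p.2⟫ = ⟪p.2, p.1⟫ := fun p hp => hpair p hp p hp
  have hlow : ∀ p ∈ S, |l.im| * ‖p.1‖ ≤ ‖p.2 - l • p.1‖ := fun p hp => aux_lower l (hself p hp)
  have Szero : (0 : K × K) ∈ S := hS ▸ adjR_zero S
  have Sadd : ∀ {p q : K × K}, p ∈ S → q ∈ S → p + q ∈ S := by
    intro p q hp hq; rw [← hS] at hp hq ⊢; exact adjR_add hp hq
  have Ssmul : ∀ {p : K × K} (c : ℂ), p ∈ S → c • p ∈ S := by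
    intro p c hp; rw [← hS] at hp ⊢; exact adjR_smul c hp
  have Ssub : ∀ {p q : K × K}, p ∈ S → q ∈ S → p - q ∈ S := by
    intro p q hp hq; rw [← hS] at hp hq ⊢; exact adjR_sub hp hq
  have Sclosed : IsClosed S := hS ▸ adjR_isClosed S
  have hker : ∀ p ∈ S, p.2 - l • p.1 = 0 → p = 0 := by
    intro p hp h0
    have h1 := hlow p hp
    rw [h0, norm_zero] at h1
    have h2 : ‖p.1‖ = 0 := le_antisymm (by nlinarith [norm_nonneg p.1]) (norm_nonneg _)
    have h3 : p.1 = 0 := norm_eq_zero.mp h2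
    have h4 : p.2 = 0 := by
      have := sub_eq_zero.mp h0
      rw [this, h3, smul_zero]
    exact Prod.ext h3 h4
  have huniq : ∀ p ∈ S, ∀ q ∈ S, p.2 - l • p.1 = q.2 - l • q.1 → p = q := by
    intro p hp q hq he
    have h0 : (p - q).2 - l • (p - q).1 = 0 := by
      simp only [Prod.fst_sub, Prod.snd_sub, smul_sub]
      rw [sub_sub_sub_comm, he, sub_self]
    have := hker _ (Ssub hp hq) h0
    exact sub_eq_zero.mp this
  let M : Submodule ℂ K := {
    carrier := {x | ∃ p ∈ S, p.2 - l • p.1 = x}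
    add_mem' := by
      rintro a b ⟨p, hp, rfl⟩ ⟨q, hq, rfl⟩
      refine ⟨p + q, Sadd hp hq, ?_⟩
      simp only [Prod.fst_add, Prod.snd_add, smul_add]
      abel
    zero_mem' := ⟨0, Szero, by simp⟩
    smul_mem' := by
      rintro c a ⟨p, hp, rfl⟩
      refine ⟨c • p, Ssmul c hp, ?_⟩
      simp only [Prod.smul_fst, Prod.smul_snd, smul_sub, smul_comm l c] }
  have Mclosed : IsClosed (M : Set K) := by
    apply IsSeqClosed.isClosed
    intro u x hu hux
    choose p hp hpx using hu
    have hcs : CauchySeq u := hux.cauchySeq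
    have hcs1 : CauchySeq (fun n => (p n).1) := by
      rw [Metric.cauchySeq_iff] at hcs ⊢
      intro ε hε
      obtain ⟨N, hN⟩ := hcs (ε * |l.im|) (by positivity)
      refine ⟨N, fun m hm n hn => ?_⟩
      have hd : |l.im| * ‖(p m).1 - (p n).1‖ ≤ ‖u m - u n‖ := by
        have h1 := hlow (p m - p n) (Ssub (hp m) (hp n))
        rw [Prod.fst_sub, Prod.snd_sub, smul_sub, sub_sub_sub_comm, hpx m, hpx n] at h1
        exact h1
      have h5 := hN m hm n hn
      rw [dist_eq_norm] at h5 ⊢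
      nlinarith [norm_nonneg ((p m).1 - (p n).1)]
    obtain ⟨y, hy⟩ := cauchySeq_tendsto_of_complete hcs1
    have h2 : Filter.Tendsto (fun n => (p n).2) Filter.atTop (nhds (x + l • y)) := by
      exact (hux.add (hy.const_smul l)).congr (fun n => (sub_eq_iff_eq_add.mp (hpx n)).symm)
    have hmem : (y, x + l • y) ∈ S :=
      Sclosed.mem_of_tendsto (hy.prodMk_nhds h2) (Filter.Eventually.of_forall (fun n => hp n))
    exact ⟨(y, x + l • y), hmem, by simp⟩
  have Mtop : M = ⊤ := by
    haveI : CompleteSpace M := Mclosed.completeSpace_coe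
    apply Submodule.orthogonal_eq_bot_iff.mp
    rw [Submodule.eq_bot_iff]
    intro x hx
    rw [Submodule.mem_orthogonal] at hx
    have hq : (x, (starRingEnd ℂ) l • x) ∈ adjR S := by
      intro r hr
      have h0 : ⟪r.2 - l • r.1, x⟫ = 0 := hx _ ⟨r, hr, rfl⟩
      rw [inner_sub_left, inner_smul_left, sub_eq_zero] at h0
      have h1 := congrArg (starRingEnd ℂ) h0
      simp only [map_mul, inner_conj_symm, RingHomCompTriple.comp_apply, Complex.conj_conj] at h1
      rw [inner_smul_left, Complex.conj_conj]
      exact h1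
    rw [hS] at hq
    have h2 := hself _ hq
    simp only [inner_smul_left, inner_smul_right, Complex.conj_conj] at h2
    have h3 : ⟪x, x⟫ = 0 := by
      by_contra hne
      have := mul_right_cancel₀ hne h2
      exact hl (Complex.conj_eq_iff_im.mp this)
    simpa using inner_self_eq_zero.mp h3
  have hex : ∀ x : K, ∃ p, p ∈ S ∧ p.2 - l • p.1 = x := by
    intro x
    have hx : x ∈ M := by rw [Mtop]; trivial
    exact hx
  choose P hPS hPx using hex
  have hP1 : ∀ x y, P (x + y) = P x + P y := by
    intro x y
    have h5 : (P x + P y).2 - l • (P x + P y).1 = x + y := by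
      have h6 : (P x + P y).2 - l • (P x + P y).1
          = ((P x).2 - l • (P x).1) + ((P y).2 - l • (P y).1) := by
        simp only [Prod.fst_add, Prod.snd_add, smul_add]; abel
      rw [h6, hPx, hPx]
    refine huniq _ (hPS (x + y)) _ (Sadd (hPS x) (hPS y)) ?_
    rw [hPx (x + y), h5]
  have hPs : ∀ (c : ℂ) (x : K), P (c • x) = c • P x := by
    intro c x
    have h5 : (c • P x).2 - l • (c • P x).1 = c • x := by
      rw [Prod.smul_snd, Prod.smul_fst, smul_comm l c, ← smul_sub, hPx]
    refine huniq _ (hPS (c • x)) _ (Ssmul c (hPS x)) ?_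
    rw [hPx (c • x), h5]
  have hbound : ∀ x, ‖(P x).1‖ ≤ |l.im|⁻¹ * ‖x‖ := by
    intro x
    have h1 := hlow _ (hPS x)
    rw [hPx x] at h1
    rw [inv_mul_eq_div, le_div_iff₀ hpos]
    linarith
  let B₀ : K →ₗ[ℂ] K := {
    toFun := fun x => (P x).1
    map_add' := fun x y => by
      show (P (x + y)).1 = (P x).1 + (P y).1
      rw [hP1]; rfl
    map_smul' := fun c x => by
      simp only [RingHom.id_apply]
      show (P (c • x)).1 = c • (P x).1
      rw [hPs]; rfl }
  refine ⟨B₀.mkContinuous (|l.im|⁻¹) hbound, ?_, ?_⟩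
  · intro x
    have h2 : (P x).2 = x + l • (P x).1 := by
      have := hPx x; rw [sub_eq_iff_eq_add] at this; exact this
    have h3 : P x = ((P x).1, x + l • (P x).1) := by rw [← h2]
    have h4 := hPS x
    rw [h3] at h4
    exact h4
  · intro p hp
    exact congrArg Prod.fst (huniq _ (hPS _) _ hp (hPx _))

end Resolvent

section WLp
variable {E F : Type*} [NormedAddCommGroup E] [InnerProductSpace ℂ E]
  [NormedAddCommGroup F] [InnerProductSpace ℂ F]

noncomputable def eH (x : E) (y : F) : WithLp 2 (E × F) := (WithLp.equiv 2 (E × F)).symm (x, y)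

lemma eH_fst (x : E) (y : F) : (eH x y).fst = x := rfl
lemma eH_snd (x : E) (y : F) : (eH x y).snd = y := rfl
lemma eH_eta (z : WithLp 2 (E × F)) : eH z.fst z.snd = z := rfl
lemma add_fst (z w : WithLp 2 (E × F)) : (z + w).fst = z.fst + w.fst := rfl
lemma add_snd (z w : WithLp 2 (E × F)) : (z + w).snd = z.snd + w.snd := rfl
lemma smul_fst' (c : ℂ) (z : WithLp 2 (E × F)) : (c • z).fst = c • z.fst := rfl
lemma smul_snd' (c : ℂ) (z : WithLp 2 (E × F)) : (c • z).snd = c • z.snd := rfl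
lemma sub_fst' (z w : WithLp 2 (E × F)) : (z - w).fst = z.fst - w.fst := rfl
lemma sub_snd' (z w : WithLp 2 (E × F)) : (z - w).snd = z.snd - w.snd := rfl
lemma eH_add (a c : E) (b d : F) : eH a b + eH c d = eH (a + c) (b + d) := rfl
lemma eH_smul (c : ℂ) (a : E) (b : F) : c • eH a b = eH (c • a) (c • b) := rfl
lemma eH_sub (a c : E) (b d : F) : eH a b - eH c d = eH (a - c) (b - d) := rfl

lemma inner_eH (a c : E) (b d : F) : (⟪eH a b, eH c d⟫ : ℂ) = ⟪a, c⟫ + ⟪b, d⟫ :=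
  WithLp.prod_inner_apply _ _

lemma innerH_expand (z w : WithLp 2 (E × F)) : (⟪z, w⟫ : ℂ) = ⟪z.fst, w.fst⟫ + ⟪z.snd, w.snd⟫ :=
  WithLp.prod_inner_apply _ _

lemma normH_sq (z : WithLp 2 (E × F)) : ‖z‖ ^ 2 = ‖z.fst‖ ^ 2 + ‖z.snd‖ ^ 2 := by
  have h := WithLp.prod_inner_apply (𝕜 := ℂ) z z
  have h2 := congrArg (RCLike.re (K := ℂ)) h
  rw [inner_self_eq_norm_sq (𝕜 := ℂ), map_add, inner_self_eq_norm_sq (𝕜 := ℂ),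
    inner_self_eq_norm_sq (𝕜 := ℂ)] at h2
  exact h2

lemma normH_fst_le (z : WithLp 2 (E × F)) : ‖z.fst‖ ≤ ‖z‖ := by
  nlinarith [normH_sq z, norm_nonneg z, norm_nonneg z.fst, norm_nonneg z.snd, sq_nonneg ‖z.snd‖]

lemma normH_snd_le (z : WithLp 2 (E × F)) : ‖z.snd‖ ≤ ‖z‖ := by
  nlinarith [normH_sq z, norm_nonneg z, norm_nonneg z.fst, norm_nonneg z.snd]

lemma norm_eH_left (x : E) : ‖(eH x 0 : WithLp 2 (E × F))‖ = ‖x‖ := by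
  have h := normH_sq (eH x (0 : F))
  rw [eH_fst, eH_snd, norm_zero] at h
  nlinarith [norm_nonneg (eH x (0:F)), norm_nonneg x]

end WLp


section MainTr
variable {E F : Type*} [NormedAddCommGroup E] [InnerProductSpace ℂ E] [CompleteSpace E]
  [NormedAddCommGroup F] [InnerProductSpace ℂ F] [CompleteSpace F]

def mainT (Γ : Set ((E × E) × (F × F))) : Set (WithLp 2 (E × F) × WithLp 2 (E × F)) :=
  {q | ((q.1.fst, q.2.fst), (q.1.snd, -q.2.snd)) ∈ Γ}

lemma mem_mainT {Γ : Set ((E × E) × (F × F))} (a c : E) (b d : F) :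
    (eH a b, eH c d) ∈ mainT Γ ↔ ((a, c), (b, -d)) ∈ Γ := Iff.rfl

-- kIP conjugate-linearity in second argument
lemma kIP_add₂ {G : Type*} [NormedAddCommGroup G] [InnerProductSpace ℂ G]
    (p a b : G × G) : kIP p (a + b) = kIP p a + kIP p b := by
  simp only [kIP, Prod.fst_add, Prod.snd_add, inner_add_left]; ring

lemma kIP_smul₂ {G : Type*} [NormedAddCommGroup G] [InnerProductSpace ℂ G]
    (p : G × G) (c : ℂ) (a : G × G) : kIP p (c • a) = (starRingEnd ℂ) c * kIP p a := by
  simp only [kIP, Prod.smul_fst, Prod.smul_snd, inner_smul_left]; ring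

lemma kIP_sub₂ {G : Type*} [NormedAddCommGroup G] [InnerProductSpace ℂ G]
    (p a b : G × G) : kIP p (a - b) = kIP p a - kIP p b := by
  simp only [kIP, Prod.fst_sub, Prod.snd_sub, inner_sub_left]; ring

lemma kIP_zero₂ {G : Type*} [NormedAddCommGroup G] [InnerProductSpace ℂ G]
    (p : G × G) : kIP p (0 : G × G) = 0 := by
  simp [kIP]

variable {Γ : Set ((E × E) × (F × F))}

lemma Γ_mem_iff (hKA : invR Γ = kreinAdj Γ) (r : (E × E) × (F × F)) :
    r ∈ Γ ↔ ∀ s ∈ Γ, kIP s.1 r.1 = kIP s.2 r.2 := by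
  constructor
  · intro hr s hs
    have h1 : (r.2, r.1) ∈ invR Γ := hr
    rw [hKA] at h1
    exact h1 s hs
  · intro h
    have h1 : (r.2, r.1) ∈ kreinAdj Γ := h
    rw [← hKA] at h1
    exact h1

lemma Γ_zero (hKA : invR Γ = kreinAdj Γ) : (0 : (E × E) × (F × F)) ∈ Γ := by
  rw [Γ_mem_iff hKA]
  intro s hs
  simp only [Prod.fst_zero, Prod.snd_zero, kIP_zero₂]

lemma Γ_add (hKA : invR Γ = kreinAdj Γ) {p q : (E × E) × (F × F)}
    (hp : p ∈ Γ) (hq : q ∈ Γ) : p + q ∈ Γ := by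
  rw [Γ_mem_iff hKA] at hp hq ⊢
  intro s hs
  rw [Prod.fst_add, Prod.snd_add, kIP_add₂, kIP_add₂, hp s hs, hq s hs]

lemma Γ_smul (hKA : invR Γ = kreinAdj Γ) (c : ℂ) {p : (E × E) × (F × F)}
    (hp : p ∈ Γ) : c • p ∈ Γ := by
  rw [Γ_mem_iff hKA] at hp ⊢
  intro s hs
  rw [Prod.smul_fst, Prod.smul_snd, kIP_smul₂, kIP_smul₂, hp s hs]

lemma Γ_sub (hKA : invR Γ = kreinAdj Γ) {p q : (E × E) × (F × F)}
    (hp : p ∈ Γ) (hq : q ∈ Γ) : p - q ∈ Γ := by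
  rw [Γ_mem_iff hKA] at hp hq ⊢
  intro s hs
  rw [Prod.fst_sub, Prod.snd_sub, kIP_sub₂, kIP_sub₂, hp s hs, hq s hs]

lemma Γ_closed (hKA : invR Γ = kreinAdj Γ) : IsClosed Γ := by
  have h : Γ = ⋂ (s : (E × E) × (F × F)) (_ : s ∈ Γ),
      {r : (E × E) × (F × F) | kIP s.1 r.1 = kIP s.2 r.2} := by
    ext r
    simp only [Set.mem_iInter, Set.mem_setOf_eq]
    exact Γ_mem_iff hKA r
  rw [h]
  refine isClosed_iInter fun s => isClosed_iInter fun _ => isClosed_eq ?_ ?_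
  · simp only [kIP]
    exact (continuous_const.mul ((continuous_fst.fst).inner continuous_const)).add
      (continuous_const.mul ((continuous_fst.snd).inner continuous_const))
  · simp only [kIP]
    exact (continuous_const.mul ((continuous_snd.fst).inner continuous_const)).add
      (continuous_const.mul ((continuous_snd.snd).inner continuous_const))

lemma Γ_sv (hKA : invR Γ = kreinAdj Γ) (hmul : mulR Γ = {0}) {x : E × E} {a b : F × F}
    (ha : (x, a) ∈ Γ) (hb : (x, b) ∈ Γ) : a = b := by
  have h1 : ((x, a) - (x, b)) ∈ Γ := Γ_sub hKA ha hb
  have h2 : ((0 : E × E), a - b) ∈ Γ := by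
    simpa using h1
  have h3 : a - b ∈ mulR Γ := h2
  rw [hmul] at h3
  exact sub_eq_zero.mp h3

lemma mainT_adj (hKA : invR Γ = kreinAdj Γ) : adjR (mainT Γ) = mainT Γ := by
  ext z
  constructor
  · intro h
    show ((z.1.fst, z.2.fst), (z.1.snd, -z.2.snd)) ∈ Γ
    rw [Γ_mem_iff hKA]
    intro s hs
    have hq : (eH s.1.1 s.2.1, eH s.1.2 (-s.2.2)) ∈ mainT Γ := by
      rw [mem_mainT]
      simpa using hs
    have h1 := h _ hq
    rw [innerH_expand, innerH_expand] at h1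
    simp only [eH_fst, eH_snd, inner_neg_right] at h1
    simp only [kIP, inner_neg_left]
    linear_combination (-Complex.I) * h1
  · intro h q hq
    have h0 : ((z.1.fst, z.2.fst), (z.1.snd, -z.2.snd)) ∈ Γ := h
    rw [Γ_mem_iff hKA] at h0
    have h1 := h0 _ hq
    rw [innerH_expand, innerH_expand]
    simp only [kIP, inner_neg_left, inner_neg_right] at h1 ⊢
    have h2 : -(⟪z.1.fst, q.2.fst⟫:ℂ) + ⟪z.2.fst, q.1.fst⟫ = ⟪z.1.snd, q.2.snd⟫ - ⟪z.2.snd, q.1.snd⟫ :=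
      mul_left_cancel₀ Complex.I_ne_zero (by linear_combination h1)
    linear_combination -h2

end MainTr


section Master
variable {E F : Type*} [NormedAddCommGroup E] [InnerProductSpace ℂ E] [CompleteSpace E]
  [NormedAddCommGroup F] [InnerProductSpace ℂ F] [CompleteSpace F]

lemma master (Γ : Set ((E × E) × (F × F))) (hKA : invR Γ = kreinAdj Γ)
    (hmul : mulR Γ = {0}) {l : ℂ} (hl : l.im ≠ 0) :
    Dense (domR (gfield Γ ((starRingEnd ℂ) l))) ∧
    compR (G1 Γ) (Hrel (A0 Γ) l) = adjR (gfield Γ ((starRingEnd ℂ) l)) := by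
  set μ := (starRingEnd ℂ) l with hμ
  have hμim : μ.im ≠ 0 := by
    rw [hμ]; simpa using hl
  have hAdj : adjR (mainT Γ) = mainT Γ := mainT_adj hKA
  obtain ⟨Bμ, hBμ_mem, hBμ_inv⟩ := selfadj_resolvent hAdj hμim
  obtain ⟨Bl, hBl_mem, hBl_inv⟩ := selfadj_resolvent hAdj hl
  have hpairT : ∀ p ∈ mainT Γ, ∀ q ∈ mainT Γ, (⟪p.1, q.2⟫:ℂ) = ⟪p.2, q.1⟫ := by
    intro p hp; rw [← hAdj] at hp; exact hp
  have pairing : ∀ x w : WithLp 2 (E × F), (⟪Bl x, w⟫:ℂ) = ⟪x, Bμ w⟫ := by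
    intro x w
    have h1 := hpairT _ (hBl_mem x) _ (hBμ_mem w)
    rw [inner_add_right, inner_add_left, inner_smul_right, inner_smul_left, ← hμ] at h1
    linear_combination h1
  -- the domain submodule
  let D : Submodule ℂ F := {
    carrier := domR (gfield Γ μ)
    zero_mem' := ⟨0, 0, by simpa only [smul_zero, Prod.mk_zero_zero] using Γ_zero hKA⟩
    add_mem' := by
      rintro a b ⟨ga, ha', hA⟩ ⟨gb, hb', hB⟩
      refine ⟨ga + gb, ha' + hb', ?_⟩
      have h2 := Γ_add hKA hA hB
      simpa only [Prod.mk_add_mk, smul_add] using h2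
    smul_mem' := by
      rintro c a ⟨g, h', hA⟩
      refine ⟨c • g, c • h', ?_⟩
      have h2 := Γ_smul hKA c hA
      simpa only [Prod.smul_mk, smul_comm c μ] using h2 }
  have hdense : Dense (domR (gfield Γ μ)) := by
    have horth : Dᗮ = ⊥ := by
      rw [Submodule.eq_bot_iff]
      intro v hv
      rw [Submodule.mem_orthogonal] at hv
      set z := Bl (eH (0:E) v) with hz
      have hz2 : z.snd = 0 := by
        have hforall : ∀ y : F, (⟪z.snd, y⟫:ℂ) = 0 := by
          intro y
          set q := Bμ (eH (0:E) y) with hq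
          have h1 := pairing (eH (0:E) v) (eH (0:E) y)
          rw [innerH_expand, innerH_expand] at h1
          simp only [eH_fst, eH_snd, inner_zero_left, inner_zero_right, zero_add] at h1
          -- h1 : ⟪z.snd, y⟫ = ⟪v, q.snd⟫
          have hkD : q.snd ∈ D := by
            have hm : ((q.fst, (0:E) + μ • q.fst), (q.snd, -(y + μ • q.snd))) ∈ Γ := hBμ_mem (eH (0:E) y)
            rw [zero_add] at hm
            exact ⟨q.fst, -(y + μ • q.snd), hm⟩
          have h2 : (⟪q.snd, v⟫:ℂ) = 0 := hv _ hkD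
          have h3 : (⟪v, q.snd⟫:ℂ) = 0 := by
            rw [← inner_conj_symm, h2, map_zero]
          rw [← hq] at h1
          rw [h1, h3]
        have := hforall z.snd
        exact inner_self_eq_zero.mp this
      have hΓ : ((z.fst, (0:E) + l • z.fst), (z.snd, -(v + l • z.snd))) ∈ Γ := hBl_mem (eH (0:E) v)
      rw [zero_add] at hΓ
      rw [hz2, smul_zero, add_zero] at hΓ
      -- symmetry gives z = 0
      have hs := hpairT _ (hBl_mem (eH (0:E) v)) _ (hBl_mem (eH (0:E) v))
      rw [inner_add_right, inner_add_left, inner_smul_right, inner_smul_left, ← hμ] at hs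
      have hzv : (⟪z, eH (0:E) v⟫:ℂ) = 0 := by
        rw [innerH_expand]
        simp [eH_fst, eH_snd, hz2]
      have hvz : (⟪eH (0:E) v, z⟫:ℂ) = 0 := by
        rw [innerH_expand]
        simp [eH_fst, eH_snd, hz2]
      rw [← hz, hzv, hvz] at hs
      have hz0 : (⟪z, z⟫:ℂ) = 0 := by
        by_contra hne
        apply hμim
        rw [hμ]
        have h4 : l = μ := by
          have h5 : l * (⟪z, z⟫:ℂ) = μ * ⟪z, z⟫ := by linear_combination hs
          exact mul_right_cancel₀ hne h5
        have := Complex.conj_eq_iff_im.mp h4.symm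
        simpa using this
      have hz00 : z = 0 := inner_self_eq_zero.mp hz0
      rw [hz00] at hΓ
      simp only [WithLp.zero_fst, WithLp.zero_snd, smul_zero] at hΓ
      have hmv : ((0:F), -v) ∈ mulR Γ := hΓ
      rw [hmul] at hmv
      have := congrArg Prod.snd (Set.mem_singleton_iff.mp hmv)
      simpa using this
    have htop : D.topologicalClosure = ⊤ := Submodule.topologicalClosure_eq_top_iff.mpr horth
    have hcoe : closure (domR (gfield Γ μ)) = Set.univ := by
      have h6 : (D.topologicalClosure : Set F) = closure (D : Set F) := rfl
      rw [htop] at h6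
      exact h6.symm
    rw [dense_iff_closure_eq]
    exact hcoe
  refine ⟨hdense, Set.Subset.antisymm ?_ ?_⟩
  · -- forward inclusion
    rintro ⟨h, v⟩ ⟨y, ⟨hyA0, hy2⟩, w, hwv⟩
    obtain ⟨h', hy⟩ := hyA0
    have heq := Γ_sv hKA hmul hwv hy
    have hw0 : w = 0 := congrArg Prod.fst heq
    rw [hw0] at hwv
    -- hwv : (y, (0, v)) ∈ Γ
    intro q hq
    obtain ⟨h'', hqΓ⟩ := hq
    -- mainT elements
    have ha : (eH y.1 (0:F), eH y.2 (-v)) ∈ mainT Γ := by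
      rw [mem_mainT]
      simpa using hwv
    have hb : (eH q.2 q.1, eH (μ • q.2) (-h'')) ∈ mainT Γ := by
      rw [mem_mainT]
      simpa using hqΓ
    have h1 := hpairT _ ha _ hb
    rw [inner_eH, inner_eH] at h1
    simp only [inner_zero_left, inner_neg_left, inner_smul_right, add_zero] at h1
    -- h1 : μ * ⟪y.1, q.2⟫ = ⟪y.2, q.2⟫ + -⟪v, q.1⟫
    have hy2' : y.2 - l • y.1 = h := hy2
    show (⟪h, q.2⟫:ℂ) = ⟪v, q.1⟫
    rw [← hy2', inner_sub_left, inner_smul_left, ← hμ]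
    linear_combination -h1
  · -- reverse inclusion
    rintro ⟨h, v⟩ hav
    let Λ₀ : E →ₗ[ℂ] ℂ := {
      toFun := fun x => ⟪h, (Bμ (eH x (0:F))).fst⟫ - ⟪v, (Bμ (eH x (0:F))).snd⟫
      map_add' := by
        intro a b
        have he : eH (a + b) (0:F) = eH a 0 + eH b 0 := by rw [eH_add, add_zero]
        simp only [he, map_add, add_fst, add_snd, inner_add_right]
        ring
      map_smul' := by
        intro c a
        have he : eH (c • a) (0:F) = c • eH a 0 := by rw [eH_smul, smul_zero]
        simp only [he, map_smul, smul_fst', smul_snd', inner_smul_right, RingHom.id_apply,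
          smul_eq_mul]
        ring }
    have hbound : ∀ x, ‖Λ₀ x‖ ≤ ((‖h‖ + ‖v‖) * ‖Bμ‖) * ‖x‖ := by
      intro x
      have hBx : ‖Bμ (eH x (0:F))‖ ≤ ‖Bμ‖ * ‖x‖ := by
        have h7 := Bμ.le_opNorm (eH x (0:F))
        rwa [norm_eH_left] at h7
      have h1 : ‖(Bμ (eH x (0:F))).fst‖ ≤ ‖Bμ‖ * ‖x‖ := le_trans (normH_fst_le _) hBx
      have h2 : ‖(Bμ (eH x (0:F))).snd‖ ≤ ‖Bμ‖ * ‖x‖ := le_trans (normH_snd_le _) hBx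
      have h3 : ‖Λ₀ x‖ ≤ ‖h‖ * ‖(Bμ (eH x (0:F))).fst‖ + ‖v‖ * ‖(Bμ (eH x (0:F))).snd‖ :=
        le_trans (norm_sub_le _ _) (add_le_add (norm_inner_le_norm _ _) (norm_inner_le_norm _ _))
      nlinarith [norm_nonneg h, norm_nonneg v,
        mul_le_mul_of_nonneg_left h1 (norm_nonneg h), mul_le_mul_of_nonneg_left h2 (norm_nonneg v)]
    set ΛC := Λ₀.mkContinuous ((‖h‖ + ‖v‖) * ‖Bμ‖) hbound with hΛC
    set f := (InnerProductSpace.toDual ℂ E).symm ΛC with hfdef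
    have hf : ∀ x : E, (⟪f, x⟫:ℂ) = ⟪h, (Bμ (eH x (0:F))).fst⟫ - ⟪v, (Bμ (eH x (0:F))).snd⟫ := by
      intro x
      rw [hfdef, InnerProductSpace.toDual_symm_apply]
      rfl
    have hzt : (eH f (0:F), eH (l • f + h) (-v)) ∈ adjR (mainT Γ) := by
      intro w hw
      set x := w.2.fst - μ • w.1.fst with hx
      set z1 := Bμ (eH x (0:F)) with hz1
      have he1 : (z1, eH x (0:F) + μ • z1) ∈ mainT Γ := hBμ_mem _
      set d := w - (z1, eH x (0:F) + μ • z1) with hdd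
      have hd : d ∈ mainT Γ := by
        rw [hdd, ← hAdj] at *
        exact adjR_sub hw he1
      have hd' : ((d.1.fst, d.2.fst), (d.1.snd, -d.2.snd)) ∈ Γ := hd
      have hd21 : d.2.fst = μ • d.1.fst := by
        show w.2.fst - (x + μ • z1.fst) = μ • (w.1.fst - z1.fst)
        rw [hx, smul_sub]
        abel
      rw [hd21] at hd'
      have hgf : (d.1.snd, d.1.fst) ∈ gfield Γ μ := ⟨-d.2.snd, hd'⟩
      have hval := hav _ hgf
      -- hval : ⟪h, d.1.fst⟫ = ⟪v, d.1.snd⟫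
      have hval2 : (⟪h, w.1.fst⟫:ℂ) - ⟪h, z1.fst⟫ = ⟪v, w.1.snd⟫ - ⟪v, z1.snd⟫ := by
        have e1 : d.1.fst = w.1.fst - z1.fst := rfl
        have e2 : d.1.snd = w.1.snd - z1.snd := rfl
        have hval' : (⟪h, d.1.fst⟫:ℂ) = ⟪v, d.1.snd⟫ := hval
        rw [e1, e2, inner_sub_right, inner_sub_right] at hval'
        exact hval'
      have hw21 : w.2.fst = x + μ • w.1.fst := by rw [hx]; abel
      rw [innerH_expand, innerH_expand]
      simp only [eH_fst, eH_snd, inner_zero_left, inner_neg_left, add_zero]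
      rw [hw21, inner_add_right, inner_smul_right, inner_add_left, inner_smul_left, ← hμ]
      rw [hf x, ← hz1]
      linear_combination -hval2
    rw [hAdj] at hzt
    have hΓf : ((f, l • f + h), ((0:F), v)) ∈ Γ := by
      have h8 : ((f, l • f + h), ((0:F), -(-v))) ∈ Γ := hzt
      rw [neg_neg] at h8
      exact h8
    exact ⟨(f, l • f + h), ⟨⟨v, hΓf⟩, by simp⟩, 0, hΓf⟩

end Master


section Bdd
variable {E F : Type*} [NormedAddCommGroup E] [InnerProductSpace ℂ E] [CompleteSpace E]
  [NormedAddCommGroup F] [InnerProductSpace ℂ F] [CompleteSpace F]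
variable {Γ : Set ((E × E) × (F × F))}

lemma A0_sym (hGreen : GreenPair Γ) {y : E × E} (hy : y ∈ A0 Γ) :
    (⟪y.1, y.2⟫:ℂ) = ⟪y.2, y.1⟫ := by
  obtain ⟨h', hΓ⟩ := hy
  have h1 := hGreen _ hΓ _ hΓ
  simp only [inner_zero_left, inner_zero_right] at h1
  linear_combination h1

lemma G1A0_iff_comp (hGreen : GreenPair Γ) (hKA : invR Γ = kreinAdj Γ)
    (hmul : mulR Γ = {0}) {l : ℂ} (hl : l.im ≠ 0) :
    IsBddRel (compR (G1 Γ) (Hrel (A0 Γ) l)) ↔ IsBddRel {q ∈ G1 Γ | q.1 ∈ A0 Γ} := by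
  have hpos : (0:ℝ) < |l.im| := abs_pos.mpr hl
  constructor
  · rintro ⟨C, hC⟩
    refine ⟨max C 0 * (1 + ‖l‖), ?_⟩
    rintro ⟨y, v⟩ ⟨hyG1, hyA0⟩
    have hmem : (y.2 - l • y.1, v) ∈ compR (G1 Γ) (Hrel (A0 Γ) l) := ⟨y, ⟨hyA0, rfl⟩, hyG1⟩
    have h1 := hC _ hmem
    have hny1 : ‖y.1‖ ≤ ‖y‖ := norm_fst_le y
    have hny2 : ‖y.2‖ ≤ ‖y‖ := norm_snd_le y
    have hb : ‖y.2 - l • y.1‖ ≤ (1 + ‖l‖) * ‖y‖ := by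
      have h2 := norm_sub_le y.2 (l • y.1)
      rw [norm_smul] at h2
      nlinarith [norm_nonneg l]
    calc ‖((y, v) : (E × E) × F).2‖ = ‖v‖ := rfl
      _ ≤ C * ‖y.2 - l • y.1‖ := h1
      _ ≤ max C 0 * ‖y.2 - l • y.1‖ :=
          mul_le_mul_of_nonneg_right (le_max_left _ _) (norm_nonneg _)
      _ ≤ max C 0 * ((1 + ‖l‖) * ‖y‖) := mul_le_mul_of_nonneg_left hb (le_max_right _ _)
      _ = max C 0 * (1 + ‖l‖) * ‖y‖ := by ring
  · rintro ⟨C, hC⟩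
    refine ⟨max C 0 * (1 + |l.im|⁻¹ + ‖l‖ * |l.im|⁻¹), ?_⟩
    rintro ⟨hh, v⟩ ⟨y, ⟨hyA0, hy2⟩, w, hwv⟩
    have hy2' : y.2 - l • y.1 = hh := hy2
    have hmem : (y, v) ∈ {q ∈ G1 Γ | q.1 ∈ A0 Γ} := ⟨⟨w, hwv⟩, hyA0⟩
    have h1 := hC _ hmem
    have hsym := A0_sym hGreen hyA0
    have hlow := aux_lower l hsym
    rw [hy2'] at hlow
    have hy1b : ‖y.1‖ ≤ |l.im|⁻¹ * ‖hh‖ := by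
      rw [inv_mul_eq_div, le_div_iff₀ hpos]; linarith
    have hy2b : ‖y.2‖ ≤ ‖hh‖ + ‖l‖ * ‖y.1‖ := by
      have he : y.2 = hh + l • y.1 := by rw [← hy2']; abel
      calc ‖y.2‖ = ‖hh + l • y.1‖ := by rw [← he]
        _ ≤ ‖hh‖ + ‖l • y.1‖ := norm_add_le _ _
        _ = ‖hh‖ + ‖l‖ * ‖y.1‖ := by rw [norm_smul]
    have hyn : ‖y‖ ≤ ‖y.1‖ + ‖y.2‖ := by
      rw [Prod.norm_def]
      exact max_le (by nlinarith [norm_nonneg y.2]) (by nlinarith [norm_nonneg y.1])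
    have hC0 : (0:ℝ) ≤ max C 0 := le_max_right _ _
    have hstep : ‖v‖ ≤ max C 0 * ‖y‖ := by
      calc ‖v‖ ≤ C * ‖y‖ := h1
        _ ≤ max C 0 * ‖y‖ := mul_le_mul_of_nonneg_right (le_max_left _ _) (norm_nonneg _)
    have hfin : ‖y‖ ≤ (1 + |l.im|⁻¹ + ‖l‖ * |l.im|⁻¹) * ‖hh‖ := by
      have hl2 : ‖l‖ * ‖y.1‖ ≤ ‖l‖ * (|l.im|⁻¹ * ‖hh‖) :=
        mul_le_mul_of_nonneg_left hy1b (norm_nonneg _)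
      nlinarith [norm_nonneg hh]
    calc ‖((hh, v) : E × F).2‖ = ‖v‖ := rfl
      _ ≤ max C 0 * ‖y‖ := hstep
      _ ≤ max C 0 * ((1 + |l.im|⁻¹ + ‖l‖ * |l.im|⁻¹) * ‖hh‖) :=
          mul_le_mul_of_nonneg_left hfin hC0
      _ = max C 0 * (1 + |l.im|⁻¹ + ‖l‖ * |l.im|⁻¹) * ‖hh‖ := by ring

lemma bdd_iff_closed (hKA : invR Γ = kreinAdj Γ) (hmul : mulR Γ = {0}) :
    IsBddRel {q ∈ G1 Γ | q.1 ∈ A0 Γ} ↔ IsClosed (A0 Γ) := by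
  constructor
  · rintro ⟨C, hC⟩
    have hC0 : (0:ℝ) ≤ max C 0 := le_max_right _ _
    apply IsSeqClosed.isClosed
    intro u y hu huy
    choose w hw using hu
    -- difference bound
    have hdiff : ∀ n m : ℕ, ‖w n - w m‖ ≤ max C 0 * ‖u n - u m‖ := by
      intro n m
      have hsub : (u n - u m, ((0:F), w n - w m)) ∈ Γ := by
        have h2 := Γ_sub hKA (hw n) (hw m)
        simpa only [Prod.mk_sub_mk, sub_zero] using h2
      have hmem : (u n - u m, w n - w m) ∈ {q ∈ G1 Γ | q.1 ∈ A0 Γ} :=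
        ⟨⟨0, hsub⟩, ⟨w n - w m, hsub⟩⟩
      have h3 := hC _ hmem
      calc ‖w n - w m‖ ≤ C * ‖u n - u m‖ := h3
        _ ≤ max C 0 * ‖u n - u m‖ := mul_le_mul_of_nonneg_right (le_max_left _ _) (norm_nonneg _)
    have hcw : CauchySeq w := by
      have hcu : CauchySeq u := huy.cauchySeq
      rw [Metric.cauchySeq_iff] at hcu ⊢
      intro ε hε
      obtain ⟨N, hN⟩ := hcu (ε / (max C 0 + 1)) (by positivity)
      refine ⟨N, fun m hm n hn => ?_⟩
      have h5 := hN m hm n hn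
      rw [dist_eq_norm] at h5 ⊢
      have h6 := hdiff m n
      have h7 : max C 0 * ‖u m - u n‖ ≤ max C 0 * (ε / (max C 0 + 1)) :=
        mul_le_mul_of_nonneg_left (le_of_lt h5) hC0
      have h8 : max C 0 * (ε / (max C 0 + 1)) < ε := by
        rw [div_eq_inv_mul]
        rw [show max C 0 * ((max C 0 + 1)⁻¹ * ε) = (max C 0 / (max C 0 + 1)) * ε by
          rw [div_eq_mul_inv]; ring]
        have : max C 0 / (max C 0 + 1) < 1 := by
          rw [div_lt_one (by positivity)]; linarith
        nlinarith
      linarith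
    obtain ⟨v, hv⟩ := cauchySeq_tendsto_of_complete hcw
    have htend : Filter.Tendsto (fun n => (u n, ((0:F), w n))) Filter.atTop
        (nhds (y, ((0:F), v))) :=
      huy.prodMk_nhds ((tendsto_const_nhds).prodMk_nhds hv)
    have hmem : (y, ((0:F), v)) ∈ Γ :=
      (Γ_closed hKA).mem_of_tendsto htend (Filter.Eventually.of_forall (fun n => hw n))
    exact ⟨v, hmem⟩
  · intro hclosed
    have huq : ∀ {x : E × E} {a b : F}, (x, ((0:F), a)) ∈ Γ → (x, ((0:F), b)) ∈ Γ → a = b := by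
      intro x a b h1 h2
      exact congrArg Prod.snd (Γ_sv hKA hmul h1 h2)
    let A0sub : Submodule ℂ (E × E) := {
      carrier := A0 Γ
      zero_mem' := ⟨0, Γ_zero hKA⟩
      add_mem' := by
        rintro a b ⟨ha', hA⟩ ⟨hb', hB⟩
        refine ⟨ha' + hb', ?_⟩
        have h2 := Γ_add hKA hA hB
        simpa only [Prod.mk_add_mk, add_zero] using h2
      smul_mem' := by
        rintro c a ⟨h', hA⟩
        refine ⟨c • h', ?_⟩
        have h2 := Γ_smul hKA c hA
        simpa only [Prod.smul_mk, smul_zero] using h2 }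
    have hch : ∀ z : A0sub, ∃ h', ((z : E × E), ((0:F), h')) ∈ Γ := fun z => z.2
    choose Tf hTf using hch
    let T : A0sub →ₗ[ℂ] F := {
      toFun := Tf
      map_add' := by
        intro a b
        have h3 : ((↑(a + b) : E × E), ((0:F), Tf a + Tf b)) ∈ Γ := by
          have h2 := Γ_add hKA (hTf a) (hTf b)
          simpa only [Prod.mk_add_mk, zero_add, Submodule.coe_add] using h2
        exact huq (hTf (a + b)) h3
      map_smul' := by
        intro c a
        have h3 : ((↑(c • a) : E × E), ((0:F), c • Tf a)) ∈ Γ := by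
          have h2 := Γ_smul hKA c (hTf a)
          simpa only [Prod.smul_mk, smul_zero, Submodule.coe_smul] using h2
        simp only [RingHom.id_apply]
        exact huq (hTf (c • a)) h3 }
    have hclosed' : IsClosed (A0sub : Set (E × E)) := hclosed
    haveI : CompleteSpace A0sub := hclosed'.completeSpace_coe
    have hgraph : IsClosed (T.graph : Set (A0sub × F)) := by
      have hgeq : (T.graph : Set (A0sub × F))
          = (fun zv : A0sub × F => ((zv.1 : E × E), ((0:F), zv.2))) ⁻¹' Γ := by
        ext zv
        simp only [Set.mem_preimage, SetLike.mem_coe, LinearMap.mem_graph_iff]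
        constructor
        · intro he
          have h3 := hTf zv.1
          rw [show Tf zv.1 = T zv.1 from rfl, ← he] at h3
          exact h3
        · intro hm
          exact (huq (hTf zv.1) hm).symm
      rw [hgeq]
      exact (Γ_closed hKA).preimage
        ((continuous_subtype_val.comp continuous_fst).prodMk
          (continuous_const.prodMk continuous_snd))
    have hcont : Continuous T := T.continuous_of_isClosed_graph hgraph
    let T' : A0sub →L[ℂ] F := ⟨T, hcont⟩
    refine ⟨‖T'‖, ?_⟩
    rintro ⟨y, v⟩ ⟨⟨w, hwv⟩, hyA0⟩
    have heq := Γ_sv hKA hmul hwv (hTf ⟨y, hyA0⟩)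
    have hveq : v = Tf ⟨y, hyA0⟩ := congrArg Prod.snd heq
    calc ‖((y, v) : (E × E) × F).2‖ = ‖T' ⟨y, hyA0⟩‖ := by rw [show ((y,v) : (E×E)×F).2 = v from rfl, hveq]; rfl
      _ ≤ ‖T'‖ * ‖(⟨y, hyA0⟩ : A0sub)‖ := T'.le_opNorm _
      _ = ‖T'‖ * ‖y‖ := rfl

end Bdd

/-- for a unitary boundary triple, `Γ₁ ∘ H(λ) = γ(conj λ)*` with
`dom γ(conj λ)* = ran (A₀ − λ)`, and boundedness of `Γ₁ ∘ H(λ)` (equivalently of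
`Γ₁` restricted to `A₀`) is equivalent to closedness of `A₀`. -/
theorem statement14 (A : Set (E × E)) (Γ : Set ((E × E) × (F × F)))
    (hA : IsClosedSymRel A) (hU : IsUnitaryBT A Γ) :
    (∀ l : ℂ, l.im ≠ 0 →
       Dense (domR (gfield Γ ((starRingEnd ℂ) l))) ∧
       compR (G1 Γ) (Hrel (A0 Γ) l) = adjR (gfield Γ ((starRingEnd ℂ) l)) ∧
       mulR (adjR (gfield Γ ((starRingEnd ℂ) l))) = {(0 : F)} ∧
       domR (adjR (gfield Γ ((starRingEnd ℂ) l))) = ranR (shiftSub (A0 Γ) l)) ∧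
    ((∃ l : ℂ, l.im ≠ 0 ∧ IsBddRel (compR (G1 Γ) (Hrel (A0 Γ) l))) ↔
       (∀ l : ℂ, l.im ≠ 0 → IsBddRel (compR (G1 Γ) (Hrel (A0 Γ) l)))) ∧
    ((∃ l : ℂ, l.im ≠ 0 ∧ IsBddRel (compR (G1 Γ) (Hrel (A0 Γ) l))) ↔
       IsBddRel {q ∈ G1 Γ | q.1 ∈ A0 Γ}) ∧
    (IsBddRel {q ∈ G1 Γ | q.1 ∈ A0 Γ} ↔ IsClosed (A0 Γ)) := by
  obtain ⟨⟨hGreen, hdomsub, hdd, hKA⟩, hmul⟩ := hU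
  have hIim : (Complex.I).im ≠ 0 := by simp
  refine ⟨?_, ?_, ?_, bdd_iff_closed hKA hmul⟩
  · intro l hl
    obtain ⟨hdense, hcomp⟩ := master Γ hKA hmul hl
    refine ⟨hdense, hcomp, ?_, ?_⟩
    · -- mulR of adjoint is {0}
      ext v
      simp only [Set.mem_singleton_iff]
      constructor
      · intro hv
        have hvperp : ∀ u ∈ domR (gfield Γ ((starRingEnd ℂ) l)), (⟪v, u⟫:ℂ) = 0 := by
          rintro u ⟨g, hg⟩
          have h1 := hv _ hg
          -- h1 : ⟪(0:F), g⟫ = ⟪v, u⟫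
          have h2 : (⟪(0:E), g⟫:ℂ) = ⟪v, u⟫ := h1
          rw [inner_zero_left] at h2
          exact h2.symm
        have hcont : Continuous fun u : F => (⟪v, u⟫:ℂ) :=
          Continuous.inner continuous_const continuous_id
        have hall : ∀ u : F, (⟪v, u⟫:ℂ) = 0 := by
          have hEq : Set.EqOn (fun u : F => (⟪v, u⟫:ℂ)) (fun _ => 0)
              (closure (domR (gfield Γ ((starRingEnd ℂ) l)))) :=
            Set.EqOn.closure (fun u hu => hvperp u hu) hcont continuous_const
          intro u
          have hu : u ∈ closure (domR (gfield Γ ((starRingEnd ℂ) l))) := by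
            rw [hdense.closure_eq]; trivial
          exact hEq hu
        exact inner_self_eq_zero.mp (hall v)
      · rintro rfl
        intro q hq
        simp
    · -- domain identification
      rw [← hcomp]
      ext hh
      constructor
      · rintro ⟨v, ⟨y, ⟨hyA0, hy2⟩, _⟩⟩
        have hy2' : y.2 - l • y.1 = hh := hy2
        exact ⟨y.1, y, hyA0, by rw [hy2']⟩
      · rintro ⟨x, q0, hq0, heq⟩
        obtain ⟨h', hΓ⟩ := hq0
        have hsnd : hh = q0.2 - l • q0.1 := congrArg Prod.snd heq
        exact ⟨h', q0, ⟨⟨h', hΓ⟩, hsnd.symm⟩, 0, hΓ⟩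
  · constructor
    · rintro ⟨l, hl, hb⟩ l' hl'
      exact (G1A0_iff_comp hGreen hKA hmul hl').mpr ((G1A0_iff_comp hGreen hKA hmul hl).mp hb)
    · intro hfa
      exact ⟨Complex.I, hIim, hfa Complex.I hIim⟩
  · constructor
    · rintro ⟨l, hl, hb⟩
      exact (G1A0_iff_comp hGreen hKA hmul hl).mp hb
    · intro hb
      exact ⟨Complex.I, hIim, (G1A0_iff_comp hGreen hKA hmul hIim).mpr hb⟩


end BT
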